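/- Let C ⊆ ℝ be a nonempty closed convex set, let σ > 0, and let p ∈ C. Then the map γ ↦ ∫ infDist((1 - γ/σ²)·p + √(2γ)·e, C)² d(gaussianReal 0 1)(e) tends to 0 as γ → 0⁺. (Expectation form of Corollary 1 in one dimension: the expected projection cost of the PGDM update applied to a feasible point vanishes as the step size vanishes.) -/

import Mathlib

open MeasureTheory Metric ProbabilityTheory Filter Real

lemma integrable_sq_gaussian : Integrable (fun e : ℝ => e ^ 2) (gaussianReal 0 1) := by
  rw [gaussianReal_of_var_ne_zero 0 one_ne_zero,
    integrable_withDensity_iff (measurable_gaussianPDF 0 1)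
      (ae_of_all _ fun x => ENNReal.ofReal_lt_top)]
  have h : (fun x : ℝ => x ^ 2 * (gaussianPDF 0 1 x).toReal)
      = fun x => (√(2*π))⁻¹ * (x ^ (2:ℝ) * Real.exp (-(2⁻¹) * x ^ 2)) := by
    ext x
    rw [gaussianPDF, ENNReal.toReal_ofReal (gaussianPDFReal_nonneg _ _ _), gaussianPDFReal,
      Real.rpow_two]
    push_cast
    ring_nf
  rw [h]
  exact (integrable_rpow_mul_exp_neg_mul_sq (by norm_num) (by norm_num)).const_mul _

/-- Expectation form of Corollary 1 in one dimension: for a nonempty closed convex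
set `C ⊆ ℝ` and a feasible point `p ∈ C`, the expected projection cost of the PGDM
update applied to `p`, with standard Gaussian noise, vanishes as the step size
`γ` tends to `0` from above. -/
theorem stmt9 (C : Set ℝ) (hCne : C.Nonempty) (hCcl : IsClosed C) (hCcv : Convex ℝ C)
    (σ : ℝ) (hσ : 0 < σ) (p : ℝ) (hpC : p ∈ C) :
    Tendsto (fun γ : ℝ =>
        ∫ e, infDist ((1 - γ / σ ^ 2) * p + Real.sqrt (2 * γ) * e) C ^ 2
          ∂(gaussianReal 0 1))
      (nhdsWithin 0 (Set.Ioi 0)) (nhds 0) := by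
  set μ := gaussianReal 0 1
  set M2 : ℝ := ∫ e, e ^ 2 ∂μ with hM2
  set B : ℝ → ℝ := fun γ => 2 * (γ / σ ^ 2) ^ 2 * p ^ 2 + 4 * γ * M2 with hB
  have hBt : Tendsto B (nhdsWithin 0 (Set.Ioi 0)) (nhds 0) := by
    have : Tendsto B (nhds 0) (nhds (B 0)) := by
      apply Continuous.tendsto
      fun_prop
    simpa [hB] using this.mono_left nhdsWithin_le_nhds
  refine tendsto_of_tendsto_of_tendsto_of_le_of_le' (tendsto_const_nhds) hBt ?_ ?_
  · exact Eventually.of_forall fun γ => integral_nonneg fun e => sq_nonneg _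
  · filter_upwards [self_mem_nhdsWithin] with γ (hγ : 0 < γ)
    have hgint : Integrable (fun e : ℝ => 2 * (γ / σ ^ 2) ^ 2 * p ^ 2 + 4 * γ * e ^ 2) μ := by
      exact (integrable_const _).add ((integrable_sq_gaussian).const_mul _)
    have hle : ∀ e : ℝ,
        infDist ((1 - γ / σ ^ 2) * p + Real.sqrt (2 * γ) * e) C ^ 2
          ≤ 2 * (γ / σ ^ 2) ^ 2 * p ^ 2 + 4 * γ * e ^ 2 := by
      intro e
      set x := (1 - γ / σ ^ 2) * p + Real.sqrt (2 * γ) * e with hx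
      have h1 : infDist x C ≤ dist x p := infDist_le_dist_of_mem hpC
      have h0 : 0 ≤ infDist x C := infDist_nonneg
      have hdist : dist x p = |(-(γ / σ ^ 2)) * p + Real.sqrt (2 * γ) * e| := by
        rw [Real.dist_eq, hx]
        ring_nf
      have htri : |(-(γ / σ ^ 2)) * p + Real.sqrt (2 * γ) * e|
          ≤ |γ / σ ^ 2| * |p| + Real.sqrt (2 * γ) * |e| := by
        calc _ ≤ |(-(γ / σ ^ 2)) * p| + |Real.sqrt (2 * γ) * e| := abs_add_le _ _
        _ = |γ / σ ^ 2| * |p| + Real.sqrt (2 * γ) * |e| := by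
            rw [abs_mul, abs_mul, abs_neg, abs_of_nonneg (Real.sqrt_nonneg _)]
      have hsq : Real.sqrt (2 * γ) ^ 2 = 2 * γ :=
        Real.sq_sqrt (by linarith)
      have hd : infDist x C ≤ |γ / σ ^ 2| * |p| + Real.sqrt (2 * γ) * |e| :=
        h1.trans (hdist ▸ htri)
      nlinarith [abs_nonneg p, abs_nonneg e, Real.sqrt_nonneg (2 * γ), sq_abs p, sq_abs e,
        sq_abs (γ / σ ^ 2), sq_nonneg (|γ / σ ^ 2| * |p| - Real.sqrt (2 * γ) * |e|)]
    have := integral_mono_of_nonneg (Eventually.of_forall fun e => sq_nonneg _) hgint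
      (Eventually.of_forall hle)
    refine this.trans ?_
    rw [integral_add (integrable_const _) ((integrable_sq_gaussian).const_mul _),
      integral_const, MeasureTheory.integral_const_mul]
    simp [μ, hM2, hB]
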